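/- Let C > 2(2^{1/4} − 1)^{−1} and 0 < ε ≤ C^{−4}, and set γ_j := C^{2^{−j} − 1} ε^{2^{−j−1}} for integers j ≥ 0. Then for every integer k with 0 ≤ k ≤ log₂ log₂ ε^{−1}: ∑_{j=0}^k γ_j ≤ 1/2. -/

import Mathlib

set_option maxHeartbeats 1000000 in
/-- If `C > 2(2^{1/4} − 1)⁻¹`, `0 < ε ≤ C⁻⁴` and `γⱼ = C^{2^{−j}−1} ε^{2^{−j−1}}`, then
`∑_{j=0}^k γⱼ ≤ 1/2` for every `0 ≤ k ≤ log₂log₂ ε⁻¹`. -/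
theorem stmt17 (C ε : ℝ) (hC : 2 / ((2 : ℝ) ^ ((1 : ℝ) / 4) - 1) < C) (hε0 : 0 < ε)
    (hε : ε ≤ (C ^ 4)⁻¹) (k : ℕ) (hk : (k : ℝ) ≤ Real.logb 2 (Real.logb 2 ε⁻¹)) :
    ∑ j ∈ Finset.range (k + 1),
        C ^ (((2 : ℝ) ^ j)⁻¹ - 1) * ε ^ (((2 : ℝ) ^ (j + 1))⁻¹) ≤ 1 / 2 := by
  -- basic facts
  have hq1 : (1 : ℝ) < (2 : ℝ) ^ ((1 : ℝ) / 4) :=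
    Real.one_lt_rpow_iff_of_pos (by norm_num) |>.mpr (Or.inl ⟨by norm_num, by norm_num⟩)
  have hq2 : (2 : ℝ) ^ ((1 : ℝ) / 4) < 2 := by
    calc (2 : ℝ) ^ ((1 : ℝ) / 4) < (2:ℝ) ^ (1:ℝ) := by
          apply Real.rpow_lt_rpow_of_exponent_lt (by norm_num) (by norm_num)
      _ = 2 := Real.rpow_one 2
  have hC2 : (2 : ℝ) < C := by
    have h1 : (0:ℝ) < (2 : ℝ) ^ ((1 : ℝ) / 4) - 1 := by linarith
    have : (2:ℝ) < 2 / ((2 : ℝ) ^ ((1 : ℝ) / 4) - 1) := by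
      rw [lt_div_iff₀ h1]; nlinarith
    linarith
  have hC0 : (0:ℝ) < C := by linarith
  have hC1 : (1:ℝ) < C := by linarith
  have hC41 : (1:ℝ) < C ^ 4 := one_lt_pow₀ hC1 (by norm_num)
  have hε1 : ε < 1 := lt_of_le_of_lt hε (by rw [inv_lt_one_iff₀]; right; exact hC41)
  set L : ℝ := Real.logb 2 ε⁻¹ with hLdef
  have hL0 : 0 < L := Real.logb_pos (by norm_num) (by rw [one_lt_inv_iff₀]; exact ⟨hε0, hε1⟩)
  have hkL : ((2:ℝ) ^ (k:ℕ)) ≤ L := by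
    have h1 : (2:ℝ) ^ (k:ℝ) ≤ (2:ℝ) ^ (Real.logb 2 L) :=
      Real.rpow_le_rpow_of_exponent_le (by norm_num) hk
    rw [Real.rpow_logb (by norm_num) (by norm_num) hL0] at h1
    rw [← Real.rpow_natCast 2 k]; exact h1
  -- x and u
  set x : ℝ := C * ε ^ ((1:ℝ)/2) with hxdef
  have hx0 : 0 < x := mul_pos hC0 (Real.rpow_pos_of_pos hε0 _)
  have hxle : x ≤ ε ^ ((1:ℝ)/4) := by
    have he4 : ε ^ ((1:ℝ)/4) ≤ C⁻¹ := by
      have h5 : ε ^ ((1:ℝ)/4) ≤ ((C^4)⁻¹) ^ ((1:ℝ)/4) :=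
        Real.rpow_le_rpow hε0.le hε (by norm_num)
      have h6 : ((C^4)⁻¹ : ℝ) ^ ((1:ℝ)/4) = C⁻¹ := by
        rw [← Real.rpow_natCast C 4, ← Real.rpow_neg hC0.le, ← Real.rpow_mul hC0.le]
        push_cast
        norm_num
        exact Real.rpow_neg_one C
      rw [h6] at h5; exact h5
    have hsplit : x = (C * ε ^ ((1:ℝ)/4)) * ε ^ ((1:ℝ)/4) := by
      rw [hxdef, mul_assoc, ← Real.rpow_add hε0]; norm_num
    have h1 : C * ε ^ ((1:ℝ)/4) ≤ 1 := by
      calc C * ε ^ ((1:ℝ)/4) ≤ C * C⁻¹ :=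
            mul_le_mul_of_nonneg_left he4 hC0.le
        _ = 1 := mul_inv_cancel₀ hC0.ne'
    calc x = (C * ε ^ ((1:ℝ)/4)) * ε ^ ((1:ℝ)/4) := hsplit
      _ ≤ 1 * ε ^ ((1:ℝ)/4) :=
          mul_le_mul_of_nonneg_right h1 (Real.rpow_pos_of_pos hε0 _).le
      _ = ε ^ ((1:ℝ)/4) := one_mul _
  set u : ℝ := x ^ (((2:ℝ) ^ k)⁻¹) with hudef
  have hu0 : 0 < u := Real.rpow_pos_of_pos hx0 _
  have h2k0 : (0:ℝ) < (2:ℝ) ^ k := by positivity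
  -- u ≤ 2^(-1/4)
  have hu14 : u ≤ (2:ℝ) ^ (-(1/4 : ℝ)) := by
    have h1 : u ≤ (ε ^ ((1:ℝ)/4)) ^ (((2:ℝ) ^ k)⁻¹) :=
      Real.rpow_le_rpow hx0.le hxle (by positivity)
    have h2 : (ε ^ ((1:ℝ)/4)) ^ (((2:ℝ) ^ k)⁻¹) = ε ^ ((1/4 : ℝ) * ((2:ℝ) ^ k)⁻¹) :=
      (Real.rpow_mul hε0.le _ _).symm
    have h3 : ε ^ ((1/4 : ℝ) * ((2:ℝ) ^ k)⁻¹) ≤ ε ^ ((4 * L)⁻¹) := by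
      apply Real.rpow_le_rpow_of_exponent_ge hε0 hε1.le
      rw [mul_inv]
      have hinv : L⁻¹ ≤ ((2:ℝ)^k)⁻¹ := inv_anti₀ h2k0 hkL
      nlinarith [inv_pos.mpr hL0, inv_pos.mpr h2k0]
    have h4 : ε ^ ((4 * L)⁻¹) = (2:ℝ) ^ (-(1/4 : ℝ)) := by
      have hε2 : ε = (2:ℝ) ^ (-L) := by
        have h7 : (2:ℝ) ^ L = ε⁻¹ := Real.rpow_logb (by norm_num) (by norm_num) (by positivity)
        rw [Real.rpow_neg (by norm_num : (0:ℝ) ≤ 2), h7, inv_inv]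
      rw [hε2, ← Real.rpow_mul (by norm_num : (0:ℝ) ≤ 2)]
      congr 1
      have hLne : L ≠ 0 := hL0.ne'
      field_simp
    calc u ≤ _ := h1
      _ = _ := h2
      _ ≤ _ := h3
      _ = _ := h4
  clear_value L x u
  have hu1 : u < 1 :=
    lt_of_le_of_lt hu14 (Real.rpow_lt_one_of_one_lt_of_neg (by norm_num) (by norm_num))
  have h1u : (0:ℝ) < 1 - u := by linarith
  -- u * (C + 2) ≤ C
  have huC : u * (C + 2) ≤ C := by
    have hq : (2:ℝ) ^ (-(1/4 : ℝ)) = ((2:ℝ) ^ ((1:ℝ)/4))⁻¹ := by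
      rw [← Real.rpow_neg (by norm_num : (0:ℝ) ≤ 2)]
    have hkey : 2 < C * ((2 : ℝ) ^ ((1 : ℝ) / 4) - 1) := by
      rw [div_lt_iff₀ (by linarith)] at hC; linarith
    have h1 : (2:ℝ) ^ (-(1/4 : ℝ)) * (C + 2) ≤ C := by
      rw [hq, inv_mul_le_iff₀ (by linarith)]
      nlinarith
    calc u * (C + 2) ≤ (2:ℝ) ^ (-(1/4 : ℝ)) * (C + 2) :=
          mul_le_mul_of_nonneg_right hu14 (by linarith)
      _ ≤ C := h1
  -- termwise bound
  have hterm : ∀ j ∈ Finset.range (k + 1),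
      C ^ (((2 : ℝ) ^ j)⁻¹ - 1) * ε ^ (((2 : ℝ) ^ (j + 1))⁻¹) ≤ C⁻¹ * u ^ (k - j + 1) := by
    intro j hj
    have hjk : j ≤ k := Nat.lt_succ_iff.mp (Finset.mem_range.mp hj)
    have h2j0 : (0:ℝ) < (2:ℝ) ^ j := by positivity
    have heq : C ^ (((2 : ℝ) ^ j)⁻¹ - 1) * ε ^ (((2 : ℝ) ^ (j + 1))⁻¹)
        = C⁻¹ * x ^ (((2:ℝ) ^ j)⁻¹) := by
      rw [hxdef, Real.mul_rpow hC0.le (Real.rpow_pos_of_pos hε0 _).le]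
      rw [← Real.rpow_mul hε0.le]
      rw [Real.rpow_sub hC0, Real.rpow_one]
      have hexp : ((1:ℝ)/2) * ((2:ℝ) ^ j)⁻¹ = ((2:ℝ) ^ (j+1))⁻¹ := by
        rw [pow_succ]; field_simp
      rw [hexp]; ring
    have heq2 : x ^ (((2:ℝ) ^ j)⁻¹) = u ^ (2 ^ (k - j) : ℕ) := by
      rw [hudef, ← Real.rpow_natCast (x ^ (((2:ℝ)^k)⁻¹)) (2 ^ (k-j)), ← Real.rpow_mul hx0.le]
      congr 1
      push_cast
      have hkk : k = j + (k - j) := (Nat.add_sub_cancel' hjk).symm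
      rw [hkk, pow_add]
      field_simp
      rw [Nat.add_sub_cancel_left]
    have hle : u ^ (2 ^ (k - j) : ℕ) ≤ u ^ (k - j + 1) :=
      pow_le_pow_of_le_one hu0.le hu1.le Nat.lt_two_pow_self
    rw [heq, heq2]
    exact mul_le_mul_of_nonneg_left hle (by positivity)
  -- sum bound
  have hsum : ∑ j ∈ Finset.range (k + 1),
      C ^ (((2 : ℝ) ^ j)⁻¹ - 1) * ε ^ (((2 : ℝ) ^ (j + 1))⁻¹)
      ≤ ∑ j ∈ Finset.range (k + 1), C⁻¹ * u ^ (k - j + 1) :=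
    Finset.sum_le_sum hterm
  have hre : ∑ j ∈ Finset.range (k + 1), C⁻¹ * u ^ (k - j + 1)
      = C⁻¹ * (u * ∑ j ∈ Finset.range (k + 1), u ^ j) := by
    rw [← Finset.mul_sum]
    congr 1
    have h1 := Finset.sum_range_reflect (fun j => u ^ (j + 1)) (k + 1)
    simp only [Nat.add_sub_cancel] at h1
    rw [h1, Finset.mul_sum]
    apply Finset.sum_congr rfl
    intro j hj
    exact pow_succ' u j
  have hg : ∑ j ∈ Finset.range (k + 1), u ^ j ≤ (1 - u)⁻¹ := by
    rw [geom_sum_eq hu1.ne]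
    rw [div_le_iff_of_neg (by linarith : u - 1 < 0)]
    have heq : (1-u)⁻¹ * (u-1) = -1 := by field_simp; ring
    rw [heq]
    nlinarith [pow_nonneg hu0.le (k+1)]
  have hfin : C⁻¹ * (u * (1 - u)⁻¹) ≤ 1 / 2 := by
    have h1 : u * (1-u)⁻¹ ≤ C / 2 := by
      rw [mul_inv_le_iff₀ h1u]
      nlinarith
    calc C⁻¹ * (u * (1-u)⁻¹) ≤ C⁻¹ * (C/2) :=
          mul_le_mul_of_nonneg_left h1 (by positivity)
      _ = 1/2 := by field_simp
  calc ∑ j ∈ Finset.range (k + 1),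
        C ^ (((2 : ℝ) ^ j)⁻¹ - 1) * ε ^ (((2 : ℝ) ^ (j + 1))⁻¹)
      ≤ ∑ j ∈ Finset.range (k + 1), C⁻¹ * u ^ (k - j + 1) := hsum
    _ = C⁻¹ * (u * ∑ j ∈ Finset.range (k + 1), u ^ j) := hre
    _ ≤ C⁻¹ * (u * (1 - u)⁻¹) := by
        apply mul_le_mul_of_nonneg_left _ (by positivity)
        exact mul_le_mul_of_nonneg_left hg hu0.le
    _ ≤ 1 / 2 := hfin
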